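/- Fix a probability vector (q_1,...,q_N) with q_1 ≥ ... ≥ q_N > 0 and λ > 0; let δ = e^{1/λ}−1. Let β be supported on {1,...,K} with β_i = (1/δ)·((K+δ)√(p_i)/Σ_{j≤K}√p_j − 1) > 0 for i ≤ K, where p = μ_p is the principal's prior. If the agent's prior is μ(ω_i) = √p_i/Σ_j √p_j and the agent reports truthfully, then the principal's Bayesian posterior after recommendation a_K satisfies μ_p(ω_K | a_K) ≥ μ_p(ω_j | a_K) for all j whenever e^{1/λ}·√p_K ≥ √p_1, and this last inequality is implied by δ·√p_K ≥ Σ_{i=1}^{K−1}(√p_i − √p_K). -/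

import Mathlib

theorem stmt_18 (N : ℕ) (hN : 1 ≤ N) (lam : ℝ) (hlam : 0 < lam)
    (δ : ℝ) (hδ : δ = Real.exp (1/lam) - 1)
    (p : ℕ → ℝ)
    (hpos : ∀ i ∈ Finset.Icc 1 N, 0 < p i)
    (hdec : ∀ i ∈ Finset.Icc 1 N, ∀ j ∈ Finset.Icc 1 N, i ≤ j → p j ≤ p i)
    (hsum : ∑ i ∈ Finset.Icc 1 N, p i = 1)
    (K : ℕ) (hK : K ∈ Finset.Icc 1 N)
    (β : ℕ → ℝ)
    (hβin : ∀ i ∈ Finset.Icc 1 K,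
      β i = (1/δ) * (((K : ℝ) + δ) * Real.sqrt (p i) /
        (∑ j ∈ Finset.Icc 1 K, Real.sqrt (p j)) - 1))
    (hβout : ∀ i, i ∉ Finset.Icc 1 K → β i = 0)
    (hβpos : ∀ i ∈ Finset.Icc 1 K, 0 < β i)
    (μ : ℕ → ℝ)
    (hμ : ∀ i ∈ Finset.Icc 1 N,
      μ i = Real.sqrt (p i) / ∑ j ∈ Finset.Icc 1 N, Real.sqrt (p j))
    (u : ℕ → ℕ → ℝ) (hu : ∀ i j, u i j = if i = j then 1 else 0)
    -- π j : probability that the truthful agent recommends a_K in state ω_j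
    (π : ℕ → ℝ)
    (hπ : ∀ j, π j = β K * Real.exp (u K j / lam) /
      ∑ k ∈ Finset.Icc 1 N, β k * Real.exp (u k j / lam))
    -- post j : the principal's Bayesian posterior on state ω_j after recommendation a_K
    (post : ℕ → ℝ)
    (hpost : ∀ j, post j = π j * p j / ∑ i ∈ Finset.Icc 1 N, p i * π i) :
    (δ * Real.sqrt (p K) ≥ ∑ i ∈ Finset.Icc 1 (K - 1), (Real.sqrt (p i) - Real.sqrt (p K))
      → Real.exp (1/lam) * Real.sqrt (p K) ≥ Real.sqrt (p 1))
    ∧ (Real.exp (1/lam) * Real.sqrt (p K) ≥ Real.sqrt (p 1)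
      → ∀ j ∈ Finset.Icc 1 N, post j ≤ post K) := by
  have hK1 : 1 ≤ K := (Finset.mem_Icc.mp hK).1
  have hKN : K ≤ N := (Finset.mem_Icc.mp hK).2
  have hsub : Finset.Icc 1 K ⊆ Finset.Icc 1 N := Finset.Icc_subset_Icc_right hKN
  have hKK : K ∈ Finset.Icc 1 K := Finset.mem_Icc.mpr ⟨hK1, le_refl K⟩
  have h1K : 1 ∈ Finset.Icc 1 K := Finset.mem_Icc.mpr ⟨le_refl 1, hK1⟩
  set E := Real.exp (1/lam) with hE
  have hEδ : E = 1 + δ := by rw [hδ]; ring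
  have hδpos : 0 < δ := by
    rw [hδ]; have := Real.add_one_le_exp (1/lam)
    have h2 : 0 < 1/lam := by positivity
    nlinarith
  have hposK : ∀ i ∈ Finset.Icc 1 K, 0 < p i := fun i hi => hpos i (hsub hi)
  set T := ∑ j ∈ Finset.Icc 1 K, Real.sqrt (p j) with hTdef
  have hT : 0 < T :=
    Finset.sum_pos (fun i hi => Real.sqrt_pos.mpr (hposK i hi)) ⟨1, h1K⟩
  have hcard : (Finset.Icc 1 K).card = K := by simp
  have hβK : 0 < β K := hβpos K hKK
  have hKδ : (0:ℝ) < (K:ℝ) + δ := by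
    have : (0:ℝ) ≤ (K:ℝ) := Nat.cast_nonneg K
    linarith
  -- sum of β over Icc 1 K equals 1
  have hB : ∑ k ∈ Finset.Icc 1 K, β k = 1 := by
    rw [Finset.sum_congr rfl hβin, ← Finset.mul_sum, Finset.sum_sub_distrib,
      ← Finset.sum_div, ← Finset.mul_sum, Finset.sum_const, hcard, nsmul_eq_mul,
      mul_one, ← hTdef]
    field_simp
    ring
  -- denominator formula
  have hD : ∀ j, ∑ k ∈ Finset.Icc 1 N, β k * Real.exp (u k j / lam)
      = 1 + (if j ∈ Finset.Icc 1 K then δ * β j else 0) := by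
    intro j
    have h1 : ∑ k ∈ Finset.Icc 1 N, β k * Real.exp (u k j / lam)
        = ∑ k ∈ Finset.Icc 1 K, β k * Real.exp (u k j / lam) := by
      refine (Finset.sum_subset hsub ?_).symm
      intro k _ hk; rw [hβout k hk, zero_mul]
    have h2 : ∀ k ∈ Finset.Icc 1 K, β k * Real.exp (u k j / lam)
        = β k + (if k = j then δ * β k else 0) := by
      intro k hk
      rw [hu]
      by_cases h : k = j
      · simp only [h, if_pos rfl, if_pos]
        rw [hδ, hE]; ring
      · simp [h]
    rw [h1, Finset.sum_congr rfl h2, Finset.sum_add_distrib, hB,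
      Finset.sum_ite_eq' _ j (fun k => δ * β k)]
  have hDpos : ∀ j, 0 < 1 + (if j ∈ Finset.Icc 1 K then δ * β j else 0) := by
    intro j
    by_cases h : j ∈ Finset.Icc 1 K
    · rw [if_pos h]; nlinarith [hβpos j h]
    · rw [if_neg h]; norm_num
  have hden : ∀ j ∈ Finset.Icc 1 K, 1 + δ * β j = ((K:ℝ) + δ) * Real.sqrt (p j) / T := by
    intro j hj
    rw [hβin j hj]
    field_simp
    ring
  have hπpos : ∀ i, 0 < π i := by
    intro i
    rw [hπ, hD]
    exact div_pos (mul_pos hβK (Real.exp_pos _)) (hDpos i)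
  have hS : 0 < ∑ i ∈ Finset.Icc 1 N, p i * π i :=
    Finset.sum_pos (fun i hi => mul_pos (hpos i hi) (hπpos i)) ⟨1, hsub h1K⟩
  -- values of π · p
  have hsqK : 0 < Real.sqrt (p K) := Real.sqrt_pos.mpr (hposK K hKK)
  have hpKsq : Real.sqrt (p K) ^ 2 = p K := Real.sq_sqrt (hposK K hKK).le
  have hπK : π K * p K = β K * E * (T * Real.sqrt (p K) / ((K:ℝ) + δ)) := by
    rw [hπ, hD, if_pos hKK, hden K hKK, hu, if_pos rfl]
    rw [div_div_eq_mul_div, ← hE]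
    field_simp
    linear_combination (-E) * hpKsq
  have hπin : ∀ j ∈ Finset.Icc 1 K, j ≠ K →
      π j * p j = β K * (T * Real.sqrt (p j) / ((K:ℝ) + δ)) := by
    intro j hj hjK
    have hsq : Real.sqrt (p j) ^ 2 = p j := Real.sq_sqrt (hposK j hj).le
    have hsqpos : 0 < Real.sqrt (p j) := Real.sqrt_pos.mpr (hposK j hj)
    rw [hπ, hD, if_pos hj, hden j hj, hu, if_neg (Ne.symm hjK)]
    norm_num
    field_simp
    linear_combination (-1) * hsq
  have hπout : ∀ j, j ∉ Finset.Icc 1 K → π j * p j = β K * p j := by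
    intro j hj
    have hjK : K ≠ j := by
      intro h; exact hj (h ▸ hKK)
    rw [hπ, hD, if_neg hj, hu, if_neg hjK]
    norm_num
  refine ⟨?_, ?_⟩
  · -- Part 1
    intro h
    rw [ge_iff_le, hEδ]
    by_cases hK1' : K = 1
    · subst hK1'
      nlinarith [Real.sqrt_nonneg (p 1)]
    · have hK2 : 2 ≤ K := by omega
      have h1mem : 1 ∈ Finset.Icc 1 (K - 1) := Finset.mem_Icc.mpr ⟨le_refl 1, by omega⟩
      have hterm : ∀ i ∈ Finset.Icc 1 (K - 1), 0 ≤ Real.sqrt (p i) - Real.sqrt (p K) := by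
        intro i hi
        have hi' := Finset.mem_Icc.mp hi
        have hiN : i ∈ Finset.Icc 1 N := Finset.mem_Icc.mpr ⟨hi'.1, by omega⟩
        have := hdec i hiN K hK (by omega)
        have := Real.sqrt_le_sqrt this
        linarith
      have := Finset.single_le_sum hterm h1mem
      linarith
  · -- Part 2
    intro h1 j hj
    rw [hpost j, hpost K]
    have hnum : π j * p j ≤ π K * p K := by
      by_cases hjin : j ∈ Finset.Icc 1 K
      · by_cases hjK : j = K
        · subst hjK; exact le_refl _
        · rw [hπin j hjin hjK, hπK]
          have h1j : 1 ≤ j := (Finset.mem_Icc.mp hj).1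
          have hpj1 : p j ≤ p 1 := hdec 1 (hsub h1K) j hj h1j
          have h2 : Real.sqrt (p j) ≤ E * Real.sqrt (p K) :=
            le_trans (Real.sqrt_le_sqrt hpj1) h1
          rw [show β K * E * (T * Real.sqrt (p K) / ((K:ℝ) + δ))
              = β K * (T * (E * Real.sqrt (p K)) / ((K:ℝ) + δ)) from by ring]
          gcongr
      · rw [hπout j hjin, hπK]
        have h1j : 1 ≤ j := (Finset.mem_Icc.mp hj).1
        have hKj : K ≤ j := by
          by_contra hc
          exact hjin (Finset.mem_Icc.mpr ⟨h1j, by omega⟩)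
        have hpj : p j ≤ p K := hdec K hK j hj hKj
        have hTK : (K:ℝ) * Real.sqrt (p K) ≤ T := by
          calc (K:ℝ) * Real.sqrt (p K) = ∑ _i ∈ Finset.Icc 1 K, Real.sqrt (p K) := by
                rw [Finset.sum_const, hcard, nsmul_eq_mul]
            _ ≤ T := Finset.sum_le_sum fun i hi =>
                Real.sqrt_le_sqrt (hdec i (hsub hi) K hK (Finset.mem_Icc.mp hi).2)
        have hK1c : (1:ℝ) ≤ (K:ℝ) := by exact_mod_cast hK1
        have key : p j * ((K:ℝ) + δ) ≤ E * (T * Real.sqrt (p K)) := by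
          rw [hEδ]
          have h4 : 0 ≤ ((1:ℝ)+δ) * Real.sqrt (p K) * (T - (K:ℝ) * Real.sqrt (p K)) :=
            mul_nonneg (mul_nonneg (by linarith) hsqK.le) (sub_nonneg.mpr hTK)
          have h5 : 0 ≤ δ * ((K:ℝ) - 1) * p K :=
            mul_nonneg (mul_nonneg hδpos.le (by linarith)) (hposK K hKK).le
          have h6 : ((1:ℝ)+δ) * (K:ℝ) * Real.sqrt (p K) ^ 2 = (1+δ) * (K:ℝ) * p K := by
            rw [hpKsq]
          have h7 : ((K:ℝ)+δ) * p j ≤ ((K:ℝ)+δ) * p K :=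
            mul_le_mul_of_nonneg_left hpj hKδ.le
          nlinarith [h4, h5, h6, h7]
        have h3 : p j ≤ E * (T * Real.sqrt (p K)) / ((K:ℝ) + δ) :=
          (le_div_iff₀ hKδ).mpr key
        calc β K * p j ≤ β K * (E * (T * Real.sqrt (p K)) / ((K:ℝ) + δ)) :=
              mul_le_mul_of_nonneg_left h3 hβK.le
          _ = β K * E * (T * Real.sqrt (p K) / ((K:ℝ) + δ)) := by ring
    exact div_le_div_of_nonneg_right hnum hS.le
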